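/- In an exact Mal'tsev category, for objects x and y the map sending a co-relation (a jointly epimorphic pair of strong epimorphisms x ↠ u ↞ y, up to isomorphism) to the fiber product x ×_u y ⊆ x × y is a bijection onto the set of relations r ⊆ x × y whose projections to x and to y are both strong epimorphisms; its inverse sends r to the pushout x ⊔_r y. -/

import Mathlib

open CategoryTheory CategoryTheory.Limits

universe v u

variable {C : Type u} [Category.{v} C] [HasFiniteLimits C] [HasImages C]

/-- The composition `s ∘ r` of relations. -/
noncomputable def relComp {x y z : C} (r : Subobject (x ⨯ y)) (s : Subobject (y ⨯ z)) :
    Subobject (x ⨯ z) :=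
  Subobject.mk (image.ι (prod.lift
    (pullback.fst (r.arrow ≫ prod.snd) (s.arrow ≫ prod.fst) ≫ r.arrow ≫ prod.fst)
    (pullback.snd (r.arrow ≫ prod.snd) (s.arrow ≫ prod.fst) ≫ s.arrow ≫ prod.snd)))

/-- The opposite relation `r∨` of a relation `r ⊆ x × y`. -/
noncomputable def oppRel {x y : C} (r : Subobject (x ⨯ y)) : Subobject (y ⨯ x) :=
  Subobject.mk (r.arrow ≫ (prod.braiding x y).hom)

instance fiber_mono {x y u : C} (a : x ⟶ u) (b : y ⟶ u) :
    Mono (prod.lift (pullback.fst a b) (pullback.snd a b)) := by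
  constructor
  intro Z f g h
  apply pullback.hom_ext
  · first
      | simpa using congrArg (· ≫ (prod.fst : x ⨯ y ⟶ _)) h
      | simpa using h =≫ prod.fst
      | (have h' := congrArg (· ≫ prod.fst) h; simp only [prod.comp_lift] at h'; erw [prod.lift_fst, prod.lift_fst] at h'; exact h')
  · first
      | simpa using congrArg (· ≫ (prod.snd : x ⨯ y ⟶ _)) h
      | simpa using h =≫ prod.snd
      | (have h' := congrArg (· ≫ prod.snd) h; simp only [prod.comp_lift] at h'; erw [prod.lift_snd, prod.lift_snd] at h'; exact h')

/-- The fiber product `x ×_u y` of a cospan `a : x ⟶ u`, `b : y ⟶ u`, as a relation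
`x ×_u y ⊆ x × y`. -/
noncomputable def fiberRel {x y u : C} (a : x ⟶ u) (b : y ⟶ u) : Subobject (x ⨯ y) :=
  Subobject.mk (prod.lift (pullback.fst a b) (pullback.snd a b))

/-- `r` belongs to `R(x,y)`: both projections of the relation `r ⊆ x × y` are strong
epimorphisms. -/
def SurjRel {x y : C} (r : Subobject (x ⨯ y)) : Prop :=
  StrongEpi (r.arrow ≫ prod.fst) ∧ StrongEpi (r.arrow ≫ prod.snd)

set_option linter.unusedSectionVars false
attribute [local simp] prod.lift_fst prod.lift_snd pullback.lift_fst pullback.lift_snd prod.lift_fst_assoc prod.lift_snd_assoc pullback.lift_fst_assoc pullback.lift_snd_assoc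
set_option maxHeartbeats 1000000

lemma strongEpi_fti {X Y : C} (k : X ⟶ Y) : StrongEpi (factorThruImage k) := by
  constructor
  · infer_instance
  · intro A B n hn
    constructor
    intro f' g' sq
    let e' : X ⟶ pullback g' n := pullback.lift (factorThruImage k) f' (by rw [sq.w])
    let F : MonoFactorisation k :=
      { I := pullback g' n
        m := pullback.fst g' n ≫ image.ι k
        e := e'
        fac := by simp [e'] }
    have h0 : image.lift F ≫ pullback.fst g' n = 𝟙 _ := by
      rw [← cancel_mono (image.ι k)]
      simpa [F] using image.lift_fac F
    refine ⟨⟨⟨image.lift F ≫ pullback.snd g' n, ?_, ?_⟩⟩⟩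
    · rw [← cancel_mono n]
      simp only [Category.assoc, ← pullback.condition]
      rw [reassoc_of% h0, ← sq.w]
    · simp only [Category.assoc, ← pullback.condition]
      rw [reassoc_of% h0]

lemma mono_of_fst_eq_snd {X Y : C} (f : X ⟶ Y)
    (h : pullback.fst f f = pullback.snd f f) : Mono f := by
  constructor
  intro Z α β hab
  calc α = pullback.lift α β hab ≫ pullback.fst f f := by simp
  _ = pullback.lift α β hab ≫ pullback.snd f f := by rw [h]
  _ = β := by simp

lemma descent
    (hreg : ∀ ⦃X Y Z : C⦄ (f : X ⟶ Z) (g : Y ⟶ Z),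
      StrongEpi f → StrongEpi (pullback.snd f g))
    {X U Z : C} (f : X ⟶ U) (hf : StrongEpi f) (g : X ⟶ Z)
    (hg : pullback.fst f f ≫ g = pullback.snd f f ≫ g) :
    ∃ h : U ⟶ Z, f ≫ h = g := by
  let k : X ⟶ U ⨯ Z := prod.lift f g
  let e0 := factorThruImage k
  let m := image.ι k
  let φ : image k ⟶ U := m ≫ prod.fst
  have hfac : e0 ≫ φ = f := by simp [e0, φ, m, k]
  have he0 : StrongEpi e0 := strongEpi_fti k
  have hφ : StrongEpi φ := by
    haveI : StrongEpi (e0 ≫ φ) := by rw [hfac]; exact hf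
    exact strongEpi_of_strongEpi e0 φ
  -- kernel pair of φ
  let q1 := pullback.fst φ φ
  let q2 := pullback.snd φ φ
  let ψ := pullback.snd e0 q1
  have hψ : StrongEpi ψ := hreg e0 q1 he0
  let t1 := pullback.fst e0 q1
  let ω := pullback.snd e0 (ψ ≫ q2)
  have hω : StrongEpi ω := hreg e0 (ψ ≫ q2) he0
  let t2 := pullback.fst e0 (ψ ≫ q2)
  let π := ω ≫ ψ
  haveI : Epi π := by
    haveI := hψ; haveI := hω
    haveI : StrongEpi π := strongEpi_comp ω ψ
    infer_instance
  have ht1 : (ω ≫ t1) ≫ e0 = π ≫ q1 := by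
    simp only [Category.assoc, π]
    rw [pullback.condition (f := e0) (g := q1)]
  have ht2 : t2 ≫ e0 = π ≫ q2 := by
    simpa [π] using pullback.condition (f := e0) (g := (ψ ≫ q2))
  have hff : (ω ≫ t1) ≫ f = t2 ≫ f := by
    rw [← hfac]
    calc (ω ≫ t1) ≫ e0 ≫ φ = ((ω ≫ t1) ≫ e0) ≫ φ := by simp
    _ = (π ≫ q1) ≫ φ := by rw [ht1]
    _ = π ≫ q1 ≫ φ := by simp
    _ = π ≫ q2 ≫ φ := by rw [pullback.condition]
    _ = (π ≫ q2) ≫ φ := by simp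
    _ = (t2 ≫ e0) ≫ φ := by rw [ht2]
    _ = t2 ≫ e0 ≫ φ := by simp
  have hgg : (ω ≫ t1) ≫ g = t2 ≫ g := by
    let c := pullback.lift (ω ≫ t1) t2 hff
    calc (ω ≫ t1) ≫ g = c ≫ pullback.fst f f ≫ g := by simp [c]
    _ = c ≫ pullback.snd f f ≫ g := by rw [hg]
    _ = t2 ≫ g := by simp [c]
  have hsnd : q1 ≫ m ≫ prod.snd = q2 ≫ m ≫ prod.snd := by
    rw [← cancel_epi π]
    have e1 : e0 ≫ m ≫ prod.snd = g := by simp [e0, m, k]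
    calc π ≫ q1 ≫ m ≫ prod.snd = ((ω ≫ t1) ≫ e0) ≫ m ≫ prod.snd := by
          rw [ht1]; simp
    _ = (ω ≫ t1) ≫ g := by rw [Category.assoc, e1]
    _ = t2 ≫ g := hgg
    _ = (t2 ≫ e0) ≫ m ≫ prod.snd := by rw [Category.assoc, e1]
    _ = π ≫ q2 ≫ m ≫ prod.snd := by rw [ht2]; simp
  have hq : q1 = q2 := by
    rw [← cancel_mono m]
    apply Limits.prod.hom_ext
    · simpa [φ] using pullback.condition (f := φ) (g := φ)
    · simpa using hsnd
  haveI : Mono φ := mono_of_fst_eq_snd φ hq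
  haveI := hφ
  haveI : IsIso φ := isIso_of_mono_of_strongEpi φ
  refine ⟨inv φ ≫ m ≫ prod.snd, ?_⟩
  calc f ≫ inv φ ≫ m ≫ prod.snd = (e0 ≫ φ) ≫ inv φ ≫ m ≫ prod.snd := by rw [hfac]
  _ = e0 ≫ m ≫ prod.snd := by simp
  _ = g := by simp [e0, m, k]
lemma isPushout_of_iso_pullback
    (hreg : ∀ ⦃X Y Z : C⦄ (f : X ⟶ Z) (g : Y ⟶ Z),
      StrongEpi f → StrongEpi (pullback.snd f g))
    {X Y U W : C} (a : X ⟶ U) (b : Y ⟶ U) (ha : StrongEpi a) (hb : StrongEpi b)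
    (p : W ⟶ X) (q : W ⟶ Y) (i : W ⟶ pullback a b) [IsIso i]
    (h1 : i ≫ pullback.fst a b = p) (h2 : i ≫ pullback.snd a b = q) :
    IsPushout p q a b := by
  haveI := ha; haveI := hb
  have w : p ≫ a = q ≫ b := by
    rw [← h1, ← h2, Category.assoc, Category.assoc, pullback.condition]
  -- for any cocone (f,g), the pullback projections are coequalized
  have key : ∀ {Z : C} (f : X ⟶ Z) (g : Y ⟶ Z), p ≫ f = q ≫ g →
      ∃! h : U ⟶ Z, a ≫ h = f ∧ b ≫ h = g := by
    intro Z f g hfg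
    have hfg' : pullback.fst a b ≫ f = pullback.snd a b ≫ g := by
      rw [← cancel_epi i]
      simp only [← Category.assoc, h1, h2, hfg]
    -- kernel pair of a is coequalized by f
    let k1 := pullback.fst a a
    let k2 := pullback.snd a a
    let μ := pullback.snd b (k1 ≫ a)
    have hμ : StrongEpi μ := hreg b (k1 ≫ a) hb
    haveI := hμ
    let η := pullback.fst b (k1 ≫ a)
    have hcond : η ≫ b = μ ≫ k1 ≫ a := pullback.condition
    let c1 : pullback b (k1 ≫ a) ⟶ pullback a b :=
      pullback.lift (μ ≫ k1) η (by rw [Category.assoc, ← hcond])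
    let c2 : pullback b (k1 ≫ a) ⟶ pullback a b :=
      pullback.lift (μ ≫ k2) η (by
        have h21 : k2 ≫ a = k1 ≫ a := pullback.condition.symm
        rw [Category.assoc, h21, ← hcond])
    have hk : k1 ≫ f = k2 ≫ f := by
      rw [← cancel_epi μ]
      calc μ ≫ k1 ≫ f = (μ ≫ k1) ≫ f := by simp
      _ = c1 ≫ pullback.fst a b ≫ f := by simp [c1]
      _ = c1 ≫ pullback.snd a b ≫ g := by rw [hfg']
      _ = η ≫ g := by simp [c1]
      _ = c2 ≫ pullback.snd a b ≫ g := by simp [c2]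
      _ = c2 ≫ pullback.fst a b ≫ f := by rw [hfg']
      _ = μ ≫ k2 ≫ f := by simp [c2]
    obtain ⟨h, hh⟩ := descent hreg a ha f hk
    have hπ2 : StrongEpi (pullback.snd a b) := hreg a b ha
    haveI := hπ2
    have hbh : b ≫ h = g := by
      rw [← cancel_epi (pullback.snd a b)]
      calc pullback.snd a b ≫ b ≫ h = (pullback.fst a b ≫ a) ≫ h := by
            rw [← Category.assoc, pullback.condition]
      _ = pullback.fst a b ≫ f := by rw [Category.assoc, hh]
      _ = pullback.snd a b ≫ g := hfg'
    refine ⟨h, ⟨hh, hbh⟩, ?_⟩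
    intro h' ⟨hh1, hh2⟩
    rw [← cancel_epi a, hh, hh1]
  apply IsPushout.of_isColimit' ⟨w⟩
  exact PushoutCocone.IsColimit.mk _
    (fun s => ((key s.inl s.inr s.condition).exists.choose))
    (fun s => ((key s.inl s.inr s.condition).exists.choose_spec).1)
    (fun s => ((key s.inl s.inr s.condition).exists.choose_spec).2)
    (fun s m hm1 hm2 => by
      have := (key s.inl s.inr s.condition).unique (y₁ := m)
        (y₂ := (key s.inl s.inr s.condition).exists.choose)
        ⟨hm1, hm2⟩ ((key s.inl s.inr s.condition).exists.choose_spec)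
      exact this)

lemma isPushout_fiberRel
    (hreg : ∀ ⦃X Y Z : C⦄ (f : X ⟶ Z) (g : Y ⟶ Z),
      StrongEpi f → StrongEpi (pullback.snd f g))
    {X Y U : C} (a : X ⟶ U) (b : Y ⟶ U) (ha : StrongEpi a) (hb : StrongEpi b) :
    IsPushout ((fiberRel a b).arrow ≫ prod.fst) ((fiberRel a b).arrow ≫ prod.snd) a b := by
  let n := prod.lift (pullback.fst a b) (pullback.snd a b)
  let i : ((fiberRel a b : C)) ⟶ pullback a b := (Subobject.underlyingIso n).hom
  have hin : i ≫ n = (fiberRel a b).arrow := Subobject.underlyingIso_hom_comp_eq_mk n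
  haveI : IsIso i := Iso.isIso_hom _
  apply isPushout_of_iso_pullback hreg a b ha hb _ _ i
  · rw [← hin]; simp [n]
  · rw [← hin]; simp [n]

lemma surjRel_fiberRel
    (hreg : ∀ ⦃X Y Z : C⦄ (f : X ⟶ Z) (g : Y ⟶ Z),
      StrongEpi f → StrongEpi (pullback.snd f g))
    {X Y U : C} (a : X ⟶ U) (b : Y ⟶ U) (ha : StrongEpi a) (hb : StrongEpi b) :
    SurjRel (fiberRel a b) := by
  let n := prod.lift (pullback.fst a b) (pullback.snd a b)
  have hfst : StrongEpi (pullback.fst a b) := by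
    have h := hreg b a hb
    have : (pullbackSymmetry a b).hom ≫ pullback.snd b a = pullback.fst a b := by simp
    rw [← this]
    haveI := h
    exact strongEpi_comp _ _
  have hsnd : StrongEpi (pullback.snd a b) := hreg a b ha
  have hin : (Subobject.underlyingIso n).hom ≫ n = (fiberRel a b).arrow :=
    Subobject.underlyingIso_hom_comp_eq_mk n
  constructor
  · have : (fiberRel a b).arrow ≫ prod.fst = (Subobject.underlyingIso n).hom ≫ pullback.fst a b := by
      rw [← hin]; simp [n]; erw [prod.lift_fst]
    rw [this]
    haveI := hfst
    haveI : StrongEpi (Subobject.underlyingIso n).hom := by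
      haveI : IsIso (Subobject.underlyingIso n).hom := Iso.isIso_hom _; exact strongEpi_of_isIso _
    exact @strongEpi_comp _ _ _ _ _ _ _ this hfst
  · have : (fiberRel a b).arrow ≫ prod.snd = (Subobject.underlyingIso n).hom ≫ pullback.snd a b := by
      rw [← hin]; simp [n]; erw [prod.lift_snd]
    rw [this]
    haveI := hsnd
    haveI : StrongEpi (Subobject.underlyingIso n).hom := by
      haveI : IsIso (Subobject.underlyingIso n).hom := Iso.isIso_hom _; exact strongEpi_of_isIso _
    exact @strongEpi_comp _ _ _ _ _ _ _ this hsnd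
lemma difunctional
    (hMal : ∀ (z : C) (s : Subobject (z ⨯ z)),
      Subobject.mk (prod.lift (𝟙 z) (𝟙 z)) ≤ s → oppRel s = s ∧ relComp s s = s)
    {X Y : C} (r : Subobject (X ⨯ Y)) {T : C}
    (f1 f2 f3 : T ⟶ (r : C))
    (h12 : f1 ≫ r.arrow ≫ prod.snd = f2 ≫ r.arrow ≫ prod.snd)
    (h23 : f2 ≫ r.arrow ≫ prod.fst = f3 ≫ r.arrow ≫ prod.fst) :
    ∃ δ : T ⟶ (r : C), δ ≫ r.arrow ≫ prod.fst = f1 ≫ r.arrow ≫ prod.fst ∧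
      δ ≫ r.arrow ≫ prod.snd = f3 ≫ r.arrow ≫ prod.snd := by
  let g : (r : C) ⨯ (r : C) ⟶ X ⨯ Y := prod.map (r.arrow ≫ prod.fst) (r.arrow ≫ prod.snd)
  have hm : prod.lift (r.arrow ≫ prod.fst) (r.arrow ≫ prod.snd) = r.arrow := by
    apply Limits.prod.hom_ext <;> simp
  let incl := pullback.fst g r.arrow
  let wit := pullback.snd g r.arrow
  -- reflexivity of the relation S = {(u,v) | (fst u, snd v) ∈ r}
  have pref : prod.lift (𝟙 (r : C)) (𝟙 (r : C)) ≫ g = 𝟙 (r : C) ≫ r.arrow := by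
    rw [Category.id_comp, ← hm]
    simp [g]
  have href : Subobject.mk (prod.lift (𝟙 (r : C)) (𝟙 (r : C))) ≤ Subobject.mk incl :=
    Subobject.mk_le_mk_of_comm (pullback.lift (prod.lift (𝟙 _) (𝟙 _)) (𝟙 _) pref)
      (pullback.lift_fst _ _ _)
  have htrans := (hMal (r : C) (Subobject.mk incl) href).2
  let sa := (Subobject.mk incl).arrow
  let L : pullback (sa ≫ prod.snd) (sa ≫ prod.fst) ⟶ (r : C) ⨯ (r : C) := prod.lift
    (pullback.fst (sa ≫ prod.snd) (sa ≫ prod.fst) ≫ sa ≫ prod.fst)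
    (pullback.snd (sa ≫ prod.snd) (sa ≫ prod.fst) ≫ sa ≫ prod.snd)
  have hL : Subobject.mk (image.ι L) = Subobject.mk incl := htrans
  have hsa : (Subobject.underlyingIso incl).inv ≫ sa = incl :=
    Subobject.underlyingIso_arrow incl
  -- the two pairs in S
  have pf1 : prod.lift f1 f2 ≫ g = f1 ≫ r.arrow := by
    conv_rhs => rw [← hm]
    simp only [g, prod.lift_map, prod.comp_lift]
    rw [h12]
  have pf2 : prod.lift f2 f3 ≫ g = f3 ≫ r.arrow := by
    conv_rhs => rw [← hm]
    simp only [g, prod.lift_map, prod.comp_lift]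
    rw [h23]
  let u1 := pullback.lift (prod.lift f1 f2) f1 pf1
  let u2 := pullback.lift (prod.lift f2 f3) f3 pf2
  let v1 := u1 ≫ (Subobject.underlyingIso incl).inv
  let v2 := u2 ≫ (Subobject.underlyingIso incl).inv
  have hv1 : v1 ≫ sa = prod.lift f1 f2 := by
    simp only [v1, Category.assoc, hsa]
    simp [u1, incl]
  have hv2 : v2 ≫ sa = prod.lift f2 f3 := by
    simp only [v2, Category.assoc, hsa]
    simp [u2, incl]
  have hw : v1 ≫ sa ≫ prod.snd = v2 ≫ sa ≫ prod.fst := by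
    rw [← Category.assoc, hv1, ← Category.assoc, hv2]
    simp
  let wPb := pullback.lift v1 v2 hw
  have hχ : (wPb ≫ factorThruImage L) ≫ image.ι L = prod.lift f1 f3 := by
    rw [Category.assoc, image.fac]
    apply Limits.prod.hom_ext
    · simp only [wPb, L, Category.assoc, prod.lift_fst, pullback.lift_fst_assoc]
      rw [reassoc_of% hv1]
      simp
    · simp only [wPb, L, Category.assoc, prod.lift_snd, pullback.lift_snd_assoc]
      rw [reassoc_of% hv2]
      simp
  let j := Subobject.ofMkLEMk (image.ι L) incl hL.le
  have hj : j ≫ incl = image.ι L := Subobject.ofMkLEMk_comp hL.le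
  have hδm : (wPb ≫ factorThruImage L ≫ j ≫ wit) ≫ r.arrow
      = prod.lift (f1 ≫ r.arrow ≫ prod.fst) (f3 ≫ r.arrow ≫ prod.snd) := by
    have hwit : wit ≫ r.arrow = incl ≫ g := pullback.condition.symm
    calc (wPb ≫ factorThruImage L ≫ j ≫ wit) ≫ r.arrow
        = wPb ≫ factorThruImage L ≫ j ≫ wit ≫ r.arrow := by simp
    _ = wPb ≫ factorThruImage L ≫ j ≫ incl ≫ g := by rw [hwit]
    _ = ((wPb ≫ factorThruImage L) ≫ (j ≫ incl)) ≫ g := by simp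
    _ = ((wPb ≫ factorThruImage L) ≫ image.ι L) ≫ g := by rw [hj]
    _ = prod.lift f1 f3 ≫ g := by rw [hχ]
    _ = prod.lift (f1 ≫ r.arrow ≫ prod.fst) (f3 ≫ r.arrow ≫ prod.snd) := by
        simp [g]
  have h1 := congrArg (· ≫ prod.fst) hδm
  have h2 := congrArg (· ≫ prod.snd) hδm
  simp only [Category.assoc, prod.lift_fst, prod.lift_snd] at h1 h2
  exact ⟨wPb ≫ factorThruImage L ≫ j ≫ wit, by simpa using h1, by simpa using h2⟩
lemma exists_cospan
    (hreg : ∀ ⦃X Y Z : C⦄ (f : X ⟶ Z) (g : Y ⟶ Z),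
      StrongEpi f → StrongEpi (pullback.snd f g))
    (hMal : ∀ (z : C) (s : Subobject (z ⨯ z)),
      Subobject.mk (prod.lift (𝟙 z) (𝟙 z)) ≤ s → oppRel s = s ∧ relComp s s = s)
    (hExact : ∀ (z : C) (s : Subobject (z ⨯ z)),
      Subobject.mk (prod.lift (𝟙 z) (𝟙 z)) ≤ s → oppRel s = s → relComp s s = s →
      ∃ (w : C) (e : z ⟶ w), StrongEpi e ∧ s = fiberRel e e)
    {x y : C} (r : Subobject (x ⨯ y)) (hr : SurjRel r) :
    ∃ (u : C) (a : x ⟶ u) (b : y ⟶ u), StrongEpi a ∧ StrongEpi b ∧ r = fiberRel a b := by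
  obtain ⟨hp, hq⟩ := hr
  let ι₀ : ((oppRel r : Subobject _) : C) ≅ (r : C) := Subobject.underlyingIso (r.arrow ≫ (prod.braiding x y).hom)
  have hoarr : ι₀.inv ≫ (oppRel r).arrow = r.arrow ≫ (prod.braiding x y).hom :=
    Subobject.underlyingIso_arrow _
  have hobase : ι₀.hom ≫ r.arrow ≫ (prod.braiding x y).hom = (oppRel r).arrow :=
    Subobject.underlyingIso_hom_comp_eq_mk _
  have hofst : (oppRel r).arrow ≫ prod.fst = ι₀.hom ≫ r.arrow ≫ prod.snd := by
    rw [← hobase]; simp [prod.braiding]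
  have hosnd : (oppRel r).arrow ≫ prod.snd = ι₀.hom ≫ r.arrow ≫ prod.fst := by
    rw [← hobase]; simp [prod.braiding]
  have hio1 : ι₀.inv ≫ (oppRel r).arrow ≫ prod.fst = r.arrow ≫ prod.snd := by
    rw [← Category.assoc, hoarr]; simp [prod.braiding]
  have hio2 : ι₀.inv ≫ (oppRel r).arrow ≫ prod.snd = r.arrow ≫ prod.fst := by
    rw [← Category.assoc, hoarr]; simp [prod.braiding]
  -- the relation s = r ∘ r° on x
  let L1 : pullback (r.arrow ≫ prod.snd) ((oppRel r).arrow ≫ prod.fst) ⟶ x ⨯ x :=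
    prod.lift
      (pullback.fst (r.arrow ≫ prod.snd) ((oppRel r).arrow ≫ prod.fst) ≫ r.arrow ≫ prod.fst)
      (pullback.snd (r.arrow ≫ prod.snd) ((oppRel r).arrow ≫ prod.fst) ≫
        (oppRel r).arrow ≫ prod.snd)
  -- reflexivity of s
  let φ : (r : C) ⟶ pullback (r.arrow ≫ prod.snd) ((oppRel r).arrow ≫ prod.fst) :=
    pullback.lift (𝟙 _) ι₀.inv (by rw [Category.id_comp, hio1])
  have hφL : φ ≫ L1 = prod.lift (r.arrow ≫ prod.fst) (r.arrow ≫ prod.fst) := by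
    apply Limits.prod.hom_ext
    · simp [φ, L1]
    · simp only [L1, Category.assoc, prod.lift_snd, φ, pullback.lift_snd_assoc]
      exact hio2
  have sqw : (φ ≫ factorThruImage L1) ≫ image.ι L1
      = (r.arrow ≫ prod.fst) ≫ prod.lift (𝟙 x) (𝟙 x) := by
    rw [Category.assoc, image.fac, hφL, prod.comp_lift, Category.comp_id]
  haveI := hp
  have sq : CommSq (φ ≫ factorThruImage L1) (r.arrow ≫ prod.fst) (image.ι L1)
      (prod.lift (𝟙 x) (𝟙 x)) := ⟨sqw⟩
  have hdiag : Subobject.mk (prod.lift (𝟙 x) (𝟙 x)) ≤ relComp r (oppRel r) :=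
    Subobject.mk_le_mk_of_comm sq.lift sq.fac_right
  obtain ⟨hsym, htr⟩ := hMal x (relComp r (oppRel r)) hdiag
  obtain ⟨w, e, he, hse⟩ := hExact x (relComp r (oppRel r)) hdiag hsym htr
  have hLe : Subobject.mk (image.ι L1)
      = Subobject.mk (prod.lift (pullback.fst e e) (pullback.snd e e)) := hse
  -- construct b by descent along the second projection
  have cond2 : pullback.fst (r.arrow ≫ prod.snd) (r.arrow ≫ prod.snd) ≫ (r.arrow ≫ prod.snd)
      = (pullback.snd (r.arrow ≫ prod.snd) (r.arrow ≫ prod.snd) ≫ ι₀.inv) ≫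
        ((oppRel r).arrow ≫ prod.fst) := by
    rw [Category.assoc, hio1, pullback.condition]
  let χ0 := pullback.lift _ _ cond2
  have hχι : (χ0 ≫ factorThruImage L1) ≫ image.ι L1
      = prod.lift
        (pullback.fst (r.arrow ≫ prod.snd) (r.arrow ≫ prod.snd) ≫ r.arrow ≫ prod.fst)
        (pullback.snd (r.arrow ≫ prod.snd) (r.arrow ≫ prod.snd) ≫ r.arrow ≫ prod.fst) := by
    rw [Category.assoc, image.fac]
    apply Limits.prod.hom_ext
    · simp [χ0, L1]
    · simp only [L1, Category.assoc, prod.lift_snd, χ0, pullback.lift_snd_assoc]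
      rw [hio2]
  let j1 := Subobject.ofMkLEMk (image.ι L1)
    (prod.lift (pullback.fst e e) (pullback.snd e e)) hLe.le
  have hj1 : j1 ≫ prod.lift (pullback.fst e e) (pullback.snd e e) = image.ι L1 :=
    Subobject.ofMkLEMk_comp hLe.le
  have keq : pullback.fst (r.arrow ≫ prod.snd) (r.arrow ≫ prod.snd) ≫
        ((r.arrow ≫ prod.fst) ≫ e)
      = pullback.snd (r.arrow ≫ prod.snd) (r.arrow ≫ prod.snd) ≫
        ((r.arrow ≫ prod.fst) ≫ e) := by
    have hξ : ((χ0 ≫ factorThruImage L1) ≫ j1) ≫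
        prod.lift (pullback.fst e e) (pullback.snd e e)
        = prod.lift
          (pullback.fst (r.arrow ≫ prod.snd) (r.arrow ≫ prod.snd) ≫ r.arrow ≫ prod.fst)
          (pullback.snd (r.arrow ≫ prod.snd) (r.arrow ≫ prod.snd) ≫ r.arrow ≫ prod.fst) := by
      rw [Category.assoc, hj1, hχι]
    have h1 := congrArg (· ≫ prod.fst) hξ
    have h2 := congrArg (· ≫ prod.snd) hξ
    simp only [Category.assoc, prod.lift_fst, prod.lift_snd] at h1 h2
    calc pullback.fst (r.arrow ≫ prod.snd) (r.arrow ≫ prod.snd) ≫ ((r.arrow ≫ prod.fst) ≫ e)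
        = (χ0 ≫ factorThruImage L1 ≫ j1 ≫ pullback.fst e e) ≫ e := by
          rw [h1]; simp
    _ = χ0 ≫ factorThruImage L1 ≫ j1 ≫ pullback.fst e e ≫ e := by simp
    _ = χ0 ≫ factorThruImage L1 ≫ j1 ≫ pullback.snd e e ≫ e := by
          rw [pullback.condition]
    _ = (χ0 ≫ factorThruImage L1 ≫ j1 ≫ pullback.snd e e) ≫ e := by simp
    _ = pullback.snd (r.arrow ≫ prod.snd) (r.arrow ≫ prod.snd) ≫ ((r.arrow ≫ prod.fst) ≫ e) := by
          rw [h2]; simp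
  obtain ⟨b, hb⟩ := descent hreg (r.arrow ≫ prod.snd) hq ((r.arrow ≫ prod.fst) ≫ e) keq
  have hcomm : (r.arrow ≫ prod.fst) ≫ e = (r.arrow ≫ prod.snd) ≫ b := hb.symm
  -- r ≤ fiberRel e b
  let ρ₀ : (r : C) ⟶ pullback e b := pullback.lift _ _ hcomm
  have hρ : ρ₀ ≫ prod.lift (pullback.fst e b) (pullback.snd e b) = r.arrow := by
    apply Limits.prod.hom_ext <;> simp [ρ₀]
  have le1 : r ≤ fiberRel e b := Subobject.le_mk_of_comm ρ₀ hρ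
  -- fiberRel e b ≤ r, via difunctionality
  have hσ : StrongEpi (pullback.snd (r.arrow ≫ prod.snd) (pullback.snd e b)) :=
    hreg _ _ hq
  have condT : pullback.fst (r.arrow ≫ prod.snd) (pullback.snd e b) ≫ (r.arrow ≫ prod.snd)
      = pullback.snd (r.arrow ≫ prod.snd) (pullback.snd e b) ≫ pullback.snd e b :=
    pullback.condition
  have condTr := condT
  have hb' : r.arrow ≫ prod.snd ≫ b = r.arrow ≫ prod.fst ≫ e := by
    simpa using hb
  have prfζ : (pullback.snd (r.arrow ≫ prod.snd) (pullback.snd e b) ≫ pullback.fst e b) ≫ e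
      = (pullback.fst (r.arrow ≫ prod.snd) (pullback.snd e b) ≫ (r.arrow ≫ prod.fst)) ≫ e := by
    simp only [Category.assoc]
    rw [pullback.condition (f := e) (g := b), ← reassoc_of% condTr, hb']
  let ζ : pullback (r.arrow ≫ prod.snd) (pullback.snd e b) ⟶ pullback e e :=
    pullback.lift _ _ prfζ
  let j2 := Subobject.ofMkLEMk (prod.lift (pullback.fst e e) (pullback.snd e e))
    (image.ι L1) hLe.ge
  have hj2 : j2 ≫ image.ι L1 = prod.lift (pullback.fst e e) (pullback.snd e e) :=
    Subobject.ofMkLEMk_comp hLe.ge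
  have hτ : (ζ ≫ j2) ≫ image.ι L1
      = prod.lift (pullback.snd (r.arrow ≫ prod.snd) (pullback.snd e b) ≫ pullback.fst e b)
        (pullback.fst (r.arrow ≫ prod.snd) (pullback.snd e b) ≫ (r.arrow ≫ prod.fst)) := by
    rw [Category.assoc, hj2]
    apply Limits.prod.hom_ext <;> simp [ζ]
  -- cover the pullback by the image pullback
  have hc : StrongEpi (pullback.snd (factorThruImage L1) (ζ ≫ j2)) :=
    hreg _ _ (strongEpi_fti L1)
  have condT' : pullback.fst (factorThruImage L1) (ζ ≫ j2) ≫ factorThruImage L1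
      = pullback.snd (factorThruImage L1) (ζ ≫ j2) ≫ (ζ ≫ j2) := pullback.condition
  set d := pullback.fst (factorThruImage L1) (ζ ≫ j2) with hd
  set c := pullback.snd (factorThruImage L1) (ζ ≫ j2) with hcdef
  have hdL : d ≫ L1 = prod.lift
      (c ≫ pullback.snd (r.arrow ≫ prod.snd) (pullback.snd e b) ≫ pullback.fst e b)
      (c ≫ pullback.fst (r.arrow ≫ prod.snd) (pullback.snd e b) ≫ (r.arrow ≫ prod.fst)) := by
    calc d ≫ L1 = d ≫ factorThruImage L1 ≫ image.ι L1 := by rw [image.fac]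
    _ = (d ≫ factorThruImage L1) ≫ image.ι L1 := by simp
    _ = (c ≫ (ζ ≫ j2)) ≫ image.ι L1 := by rw [condT']
    _ = c ≫ (ζ ≫ j2) ≫ image.ι L1 := by simp
    _ = c ≫ prod.lift
          (pullback.snd (r.arrow ≫ prod.snd) (pullback.snd e b) ≫ pullback.fst e b)
          (pullback.fst (r.arrow ≫ prod.snd) (pullback.snd e b) ≫ (r.arrow ≫ prod.fst)) := by
        rw [hτ]
    _ = _ := by rw [prod.comp_lift]
  have hdL1 := congrArg (· ≫ prod.fst) hdL
  have hdL2 := congrArg (· ≫ prod.snd) hdL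
  simp only [Category.assoc, prod.lift_fst, prod.lift_snd, L1] at hdL1 hdL2
  -- difunctionality set-up
  let f1 := d ≫ pullback.fst (r.arrow ≫ prod.snd) ((oppRel r).arrow ≫ prod.fst)
  let f2 := d ≫ pullback.snd (r.arrow ≫ prod.snd) ((oppRel r).arrow ≫ prod.fst) ≫ ι₀.hom
  let f3 := c ≫ pullback.fst (r.arrow ≫ prod.snd) (pullback.snd e b)
  have hf1p : f1 ≫ r.arrow ≫ prod.fst
      = c ≫ pullback.snd (r.arrow ≫ prod.snd) (pullback.snd e b) ≫ pullback.fst e b := by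
    simpa [f1] using hdL1
  have hpbc := pullback.condition (f := r.arrow ≫ prod.snd) (g := (oppRel r).arrow ≫ prod.fst)
  have hf2p : f2 ≫ r.arrow ≫ prod.fst = f3 ≫ r.arrow ≫ prod.fst := by
    simp only [f2, f3, Category.assoc, ← hosnd]
    simpa using hdL2
  have hf2q : f1 ≫ r.arrow ≫ prod.snd = f2 ≫ r.arrow ≫ prod.snd := by
    simp only [f1, f2, Category.assoc, ← hofst]
    rw [hpbc]
  obtain ⟨δ, hδ1, hδ2⟩ := difunctional hMal r f1 f2 f3 hf2q hf2p
  have hδarr : δ ≫ r.arrow = (c ≫ pullback.snd (r.arrow ≫ prod.snd) (pullback.snd e b)) ≫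
      prod.lift (pullback.fst e b) (pullback.snd e b) := by
    apply Limits.prod.hom_ext
    · rw [Category.assoc, hδ1, hf1p]
      simp
    · rw [Category.assoc, hδ2]
      simp only [f3, Category.assoc, prod.lift_snd]
      rw [condTr]
  haveI := hσ
  haveI := hc
  haveI : StrongEpi ((c ≫ pullback.snd (r.arrow ≫ prod.snd) (pullback.snd e b))) :=
    strongEpi_comp _ _
  have sq2 : CommSq δ (c ≫ pullback.snd (r.arrow ≫ prod.snd) (pullback.snd e b)) r.arrow
      (prod.lift (pullback.fst e b) (pullback.snd e b)) := ⟨hδarr⟩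
  have le2 : fiberRel e b ≤ r := Subobject.mk_le_of_comm sq2.lift sq2.fac_right
  -- b is a strong epi
  have hbe : StrongEpi b := by
    haveI := he
    haveI : StrongEpi ((r.arrow ≫ prod.fst) ≫ e) := strongEpi_comp _ _
    haveI : StrongEpi ((r.arrow ≫ prod.snd) ≫ b) := by rwa [hb]
    exact strongEpi_of_strongEpi (r.arrow ≫ prod.snd) b
  exact ⟨w, e, b, he, hbe, le_antisymm le1 le2⟩

/-- In an exact Mal'tsev category, the assignment sending a co-relation (a cospan of strong
epimorphisms `x ↠ u ↞ y`, up to isomorphism) to the fiber product `x ×_u y ⊆ x × y` is a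
bijection onto the set `R(x,y)` of relations with strongly epimorphic projections; its
inverse takes `r` to the pushout `x ⊔_r y`. -/
theorem corelation_fiber_bijection
    (hreg : ∀ ⦃X Y Z : C⦄ (f : X ⟶ Z) (g : Y ⟶ Z),
      StrongEpi f → StrongEpi (pullback.snd f g))
    (hMal : ∀ (z : C) (s : Subobject (z ⨯ z)),
      Subobject.mk (prod.lift (𝟙 z) (𝟙 z)) ≤ s → oppRel s = s ∧ relComp s s = s)
    (hExact : ∀ (z : C) (s : Subobject (z ⨯ z)),
      Subobject.mk (prod.lift (𝟙 z) (𝟙 z)) ≤ s → oppRel s = s → relComp s s = s →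
      ∃ (w : C) (e : z ⟶ w), StrongEpi e ∧ s = fiberRel e e)
    (x y : C) :
    (∀ (u : C) (a : x ⟶ u) (b : y ⟶ u), StrongEpi a → StrongEpi b →
      SurjRel (fiberRel a b)) ∧
    (∀ r : Subobject (x ⨯ y), SurjRel r →
      ∃ (u : C) (a : x ⟶ u) (b : y ⟶ u), StrongEpi a ∧ StrongEpi b ∧
        r = fiberRel a b ∧
        IsPushout (r.arrow ≫ prod.fst) (r.arrow ≫ prod.snd) a b) ∧
    (∀ (u u' : C) (a : x ⟶ u) (b : y ⟶ u) (a' : x ⟶ u') (b' : y ⟶ u'),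
      StrongEpi a → StrongEpi b → StrongEpi a' → StrongEpi b' →
      fiberRel a b = fiberRel a' b' →
      ∃ i : u ≅ u', a ≫ i.hom = a' ∧ b ≫ i.hom = b') := by
  refine ⟨fun u a b ha hb => surjRel_fiberRel hreg a b ha hb, ?_, ?_⟩
  · intro r hr
    obtain ⟨u, a, b, ha, hb, heq⟩ := exists_cospan hreg hMal hExact r hr
    refine ⟨u, a, b, ha, hb, heq, ?_⟩
    rw [heq]
    exact isPushout_fiberRel hreg a b ha hb
  · intro u u' a b a' b' ha hb ha' hb' h
    have h1 := isPushout_fiberRel hreg a b ha hb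
    have h2 := isPushout_fiberRel hreg a' b' ha' hb'
    rw [← h] at h2
    exact ⟨h1.isoIsPushout _ _ h2, h1.inl_isoIsPushout_hom _ _ h2, h1.inr_isoIsPushout_hom _ _ h2⟩
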